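/- Bounded differences property of the supremum of trimmed deviations. Let G be a (countable) family of classifiers, α ∈ (0,1), and let Z(ξ_1,…,ξ_n) = sup_{g∈G} ( R_α(g) − R_{n,α}(g)(ξ_1,…,ξ_n) ). If two samples (ξ_1,…,ξ_n) and (ξ'_1,…,ξ'_n) in {0,1}×ℝ^p differ only in their i-th coordinate, then |Z(ξ_1,…,ξ_n) − Z(ξ'_1,…,ξ'_n)| ≤ 1/(n(1−α)). -/

import Mathlib

open MeasureTheory

noncomputable section

/-- The classification error `R(g) = P({(y,x) : g(x) ≠ y})`. -/
def classErr {p : ℕ} (P : Measure (Bool × (Fin p → ℝ))) (g : (Fin p → ℝ) → Bool) : ℝ :=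
  (P {z | g z.2 ≠ z.1}).toReal

/-- Trimmed classification error `R_α(g) = (R(g) − α)_+ / (1 − α)`. -/
def trimmedErr {p : ℕ} (P : Measure (Bool × (Fin p → ℝ))) (α : ℝ)
    (g : (Fin p → ℝ) → Bool) : ℝ :=
  max (classErr P g - α) 0 / (1 - α)

/-- Admissible trimming weight vectors: `0 ≤ w_i ≤ 1/(n(1-α))` and `Σ w_i = 1`. -/
def weightSet (n : ℕ) (α : ℝ) : Set (Fin n → ℝ) :=
  {w | (∀ i, 0 ≤ w i ∧ w i ≤ 1 / (n * (1 - α))) ∧ ∑ i, w i = 1}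

/-- Empirical trimmed classification error
`R_{n,α}(g) = min_{w} Σ_i w_i 1{g(X_i) ≠ Y_i}`. -/
def empTrimmedErr {p : ℕ} (n : ℕ) (α : ℝ) (ξ : Fin n → Bool × (Fin p → ℝ))
    (g : (Fin p → ℝ) → Bool) : ℝ :=
  sInf ((fun w => ∑ i, w i * (if g (ξ i).2 ≠ (ξ i).1 then (1 : ℝ) else 0)) ''
    weightSet n α)

lemma weightSet_nonempty {n : ℕ} (hn : 0 < n) {α : ℝ} (hα : α ∈ Set.Ioo (0:ℝ) 1) :
    (weightSet n α).Nonempty := by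
  refine ⟨fun _ => 1 / n, ⟨fun i => ⟨by positivity, ?_⟩, ?_⟩⟩
  · apply one_div_le_one_div_of_le
    · have h1 : (0:ℝ) < 1 - α := by linarith [hα.2]
      positivity
    · nlinarith [hα.1, (Nat.cast_pos (α := ℝ)).2 hn]
  · rw [Finset.sum_const, Finset.card_univ, Fintype.card_fin, nsmul_eq_mul]
    exact mul_one_div_cancel (Nat.cast_ne_zero.2 hn.ne')

lemma emp_nonneg {p n : ℕ} {α : ℝ} (hn : 0 < n) (hα : α ∈ Set.Ioo (0:ℝ) 1)
    (ξ : Fin n → Bool × (Fin p → ℝ)) (g : (Fin p → ℝ) → Bool) :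
    0 ≤ empTrimmedErr n α ξ g := by
  apply le_csInf (Set.Nonempty.image _ (weightSet_nonempty hn hα))
  rintro b ⟨w, hw, rfl⟩
  exact Finset.sum_nonneg fun j _ => mul_nonneg (hw.1 j).1 (by positivity)

lemma emp_bddBelow {p n : ℕ} {α : ℝ}
    (ξ : Fin n → Bool × (Fin p → ℝ)) (g : (Fin p → ℝ) → Bool) :
    BddBelow ((fun w => ∑ i, w i * (if g (ξ i).2 ≠ (ξ i).1 then (1 : ℝ) else 0)) ''
      weightSet n α) := by
  refine ⟨0, ?_⟩
  rintro b ⟨w, hw, rfl⟩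
  exact Finset.sum_nonneg fun j _ => mul_nonneg (hw.1 j).1 (by positivity)

lemma emp_diff_le {p : ℕ} {α : ℝ} (hα : α ∈ Set.Ioo (0:ℝ) 1)
    {n : ℕ} (hn : 0 < n) (i : Fin n)
    (ξ ξ' : Fin n → Bool × (Fin p → ℝ))
    (hdiff : ∀ j, j ≠ i → ξ j = ξ' j) (g : (Fin p → ℝ) → Bool) :
    empTrimmedErr n α ξ g - empTrimmedErr n α ξ' g ≤ 1 / (n * (1 - α)) := by
  set c := 1 / ((n : ℝ) * (1 - α)) with hc
  set F := fun w : Fin n → ℝ => ∑ j, w j * (if g (ξ j).2 ≠ (ξ j).1 then (1 : ℝ) else 0)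
  set F' := fun w : Fin n → ℝ => ∑ j, w j * (if g (ξ' j).2 ≠ (ξ' j).1 then (1 : ℝ) else 0)
  have key : ∀ w ∈ weightSet n α, F w ≤ F' w + c := by
    intro w hw
    have hFF : F w - F' w ≤ c := by
      have : F w - F' w = ∑ j, (w j * (if g (ξ j).2 ≠ (ξ j).1 then (1 : ℝ) else 0)
          - w j * (if g (ξ' j).2 ≠ (ξ' j).1 then (1 : ℝ) else 0)) := by
        simp [F, F', Finset.sum_sub_distrib]
      rw [this, Finset.sum_eq_single i
        (fun j _ hj => by rw [hdiff j hj]; ring) (fun h => absurd (Finset.mem_univ i) h)]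
      have h1 : w i * (if g (ξ i).2 ≠ (ξ i).1 then (1 : ℝ) else 0)
          - w i * (if g (ξ' i).2 ≠ (ξ' i).1 then (1 : ℝ) else 0) ≤ w i := by
        have := (hw.1 i).1
        split_ifs <;> nlinarith
      exact h1.trans (hw.1 i).2
    linarith
  have h1 : empTrimmedErr n α ξ g - c ≤ empTrimmedErr n α ξ' g := by
    apply le_csInf (Set.Nonempty.image _ (weightSet_nonempty hn hα))
    rintro b ⟨w, hw, rfl⟩
    have h2 : sInf (F '' weightSet n α) ≤ F w := csInf_le (emp_bddBelow ξ g) ⟨w, hw, rfl⟩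
    have := key w hw
    simp only [empTrimmedErr]
    linarith
  linarith

lemma trimmedErr_le_one {p : ℕ} (P : Measure (Bool × (Fin p → ℝ))) [IsProbabilityMeasure P]
    {α : ℝ} (hα : α ∈ Set.Ioo (0:ℝ) 1) (g : (Fin p → ℝ) → Bool) :
    trimmedErr P α g ≤ 1 := by
  have hR : classErr P g ≤ 1 := by
    simpa [classErr] using ENNReal.toReal_le_of_le_ofReal zero_le_one
      (by simpa using prob_le_one (μ := P) (s := {z | g z.2 ≠ z.1}))
  have h1 : (0:ℝ) < 1 - α := by linarith [hα.2]
  rw [trimmedErr, div_le_one h1]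
  have := hα.1
  rw [max_le_iff]; constructor <;> linarith

/-- Bounded differences property of the supremum of trimmed deviations
`Z(ξ) = sup_{g ∈ G} (R_α(g) − R_{n,α}(g)(ξ))`: changing one observation changes `Z`
by at most `1/(n(1−α))`. -/
theorem sup_trimmed_deviation_bounded_differences {p : ℕ}
    (P : Measure (Bool × (Fin p → ℝ))) [IsProbabilityMeasure P]
    (G : Set ((Fin p → ℝ) → Bool)) (hGc : G.Countable)
    (hGmeas : ∀ g ∈ G, Measurable g)
    {α : ℝ} (hα : α ∈ Set.Ioo (0 : ℝ) 1)
    {n : ℕ} (hn : 0 < n) (i : Fin n)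
    (ξ ξ' : Fin n → Bool × (Fin p → ℝ))
    (hdiff : ∀ j, j ≠ i → ξ j = ξ' j) :
    |sSup ((fun g => trimmedErr P α g - empTrimmedErr n α ξ g) '' G) -
        sSup ((fun g => trimmedErr P α g - empTrimmedErr n α ξ' g) '' G)| ≤
      1 / (n * (1 - α)) := by
  have h1 : (0:ℝ) < 1 - α := by linarith [hα.2]
  have hc : (0:ℝ) ≤ 1 / (n * (1 - α)) := by positivity
  rcases G.eq_empty_or_nonempty with rfl | hG
  · simpa using hc
  have hbdd : ∀ ζ : Fin n → Bool × (Fin p → ℝ),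
      BddAbove ((fun g => trimmedErr P α g - empTrimmedErr n α ζ g) '' G) := by
    intro ζ
    refine ⟨1, ?_⟩
    rintro b ⟨g, hg, rfl⟩
    have := trimmedErr_le_one P hα g
    have := emp_nonneg hn hα ζ g
    dsimp; linarith
  have hdiff' : ∀ j, j ≠ i → ξ' j = ξ j := fun j hj => (hdiff j hj).symm
  rw [abs_sub_le_iff]
  constructor
  · rw [sub_le_iff_le_add]
    apply csSup_le (hG.image _)
    rintro b ⟨g, hg, rfl⟩
    have h2 := emp_diff_le hα hn i ξ' ξ hdiff' g
    have h3 : trimmedErr P α g - empTrimmedErr n α ξ' g ≤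
        sSup ((fun g => trimmedErr P α g - empTrimmedErr n α ξ' g) '' G) :=
      le_csSup (hbdd ξ') ⟨g, hg, rfl⟩
    dsimp; linarith
  · rw [sub_le_iff_le_add]
    apply csSup_le (hG.image _)
    rintro b ⟨g, hg, rfl⟩
    have h2 := emp_diff_le hα hn i ξ ξ' hdiff g
    have h3 : trimmedErr P α g - empTrimmedErr n α ξ g ≤
        sSup ((fun g => trimmedErr P α g - empTrimmedErr n α ξ g) '' G) :=
      le_csSup (hbdd ξ) ⟨g, hg, rfl⟩
    dsimp; linarith

end
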